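/- Every uniform subdivision of T_ω is a dominating graph; moreover any injective labelling witnesses this. -/

import Mathlib

open Filter Cardinal

/-- `f` is eventually dominated by `g`: `f n ≤ g n` for all but finitely many `n`. -/
def EvDom (f g : ℕ → ℕ) : Prop := ∀ᶠ n in Filter.atTop, f n ≤ g n

/-- A ray in `G`: an injective one-way infinite path. -/
def IsRay {X : Type} (G : SimpleGraph X) (R : ℕ → X) : Prop :=
  Function.Injective R ∧ ∀ n, G.Adj (R n) (R (n + 1))

/-- A graph is dominating if some labelling makes the labels along rays a dominating family. -/
def DominatingGraph {X : Type} (G : SimpleGraph X) : Prop :=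
  ∃ L : X → ℕ, ∀ f : ℕ → ℕ, ∃ R : ℕ → X, IsRay G R ∧ EvDom f (L ∘ R)

/-- `F` is a dominating family of functions. -/
def DomFamily (F : Set (ℕ → ℕ)) : Prop := ∀ g : ℕ → ℕ, ∃ f ∈ F, EvDom g f

/-- `F` is a bounded family of functions. -/
def BddFamily (F : Set (ℕ → ℕ)) : Prop := ∃ g : ℕ → ℕ, ∀ f ∈ F, EvDom f g

/-- The dominating number 𝔡. -/
noncomputable def dNum : Cardinal := sInf {c | ∃ F : Set (ℕ → ℕ), DomFamily F ∧ #F = c}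

/-- The bounding number 𝔟. -/
noncomputable def bNum : Cardinal := sInf {c | ∃ F : Set (ℕ → ℕ), ¬ BddFamily F ∧ #F = c}

/-- A branch vertex: one of countably infinite degree. -/
def BranchVtx {X : Type} (T : SimpleGraph X) (v : X) : Prop := #(T.neighborSet v) = ℵ₀

/-- `T` is a copy of `T_ω`: a tree all of whose vertices have countably infinite degree. -/
def IsTOmega {X : Type} (T : SimpleGraph X) : Prop :=
  T.IsTree ∧ ∀ v, BranchVtx T v

/-- `T` is a subdivision of `T_ω`: a tree with all degrees 2 or ℵ₀ in which every ray
meets a branch vertex. -/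
def IsSubdivTOmega {X : Type} (T : SimpleGraph X) : Prop :=
  T.IsTree ∧ (∀ v, #(T.neighborSet v) = 2 ∨ BranchVtx T v) ∧
    ∀ R : ℕ → X, IsRay T R → ∃ n, BranchVtx T (R n)

/-- `W` is a subdivided edge of `T` (from a branch vertex to a branch vertex, with
no branch vertices in its interior). -/
def SubdividedEdge {X : Type} (T : SimpleGraph X) {x y : X} (W : T.Walk x y) : Prop :=
  W.IsPath ∧ BranchVtx T x ∧ BranchVtx T y ∧ 0 < W.length ∧
    ∀ v ∈ W.support, v ≠ x → v ≠ y → ¬ BranchVtx T v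

/-- `T` is a uniform subdivision of `T_ω`: it has a root `r` such that at every branch
vertex `x`, all subdivided edges at `x` not towards `r` have the same length. -/
def UniformSubdivTOmega {X : Type} (T : SimpleGraph X) : Prop :=
  IsSubdivTOmega T ∧ ∃ r : X, BranchVtx T r ∧
    ∀ (x y z : X) (W : T.Walk x y) (W' : T.Walk x z),
      SubdividedEdge T W → SubdividedEdge T W' →
      (∀ P : T.Walk x r, P.IsPath → y ∉ P.support) →
      (∀ P : T.Walk x r, P.IsPath → z ∉ P.support) →
      W.length = W'.length

/-- `Ps` is a family of disjoint paths starting at `x`: each member is a path from `x`,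
and distinct members share no vertex other than `x`. -/
def DisjPathFam {X : Type} (G : SimpleGraph X) (x : X)
    (Ps : Set (Σ y : X, G.Walk x y)) : Prop :=
  (∀ P ∈ Ps, Sigma.snd P |>.IsPath) ∧
    ∀ P ∈ Ps, ∀ Q ∈ Ps, P ≠ Q →
      ∀ v, v ∈ (Sigma.snd P).support → v ∈ (Sigma.snd Q).support → v = x

open SimpleGraph Walk

section AuxStmt5

variable {X : Type} {T : SimpleGraph X}

lemma aux_getVert_injOn {u v : X} {p : T.Walk u v} (hp : p.IsPath) :
    ∀ i j, i ≤ p.length → j ≤ p.length → p.getVert i = p.getVert j → i = j := by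
  induction p with
  | nil => intro i j hi hj _; simp only [Walk.length_nil, Nat.le_zero] at hi hj; omega
  | cons h q ih =>
    rename_i a b c
    rw [Walk.cons_isPath_iff] at hp
    intro i j hi hj hij
    match i, j with
    | 0, 0 => rfl
    | 0, j+1 =>
      exfalso
      apply hp.2
      rw [Walk.mem_support_iff_exists_getVert]
      exact ⟨j, by simpa using hij.symm, by simpa using hj⟩
    | i+1, 0 =>
      exfalso
      apply hp.2
      rw [Walk.mem_support_iff_exists_getVert]
      exact ⟨i, by simpa using hij, by simpa using hi⟩
    | i+1, j+1 =>
      have := ih hp.1 i j (by simpa using hi) (by simpa using hj) (by simpa using hij)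
      omega

lemma aux_unique (ht : T.IsTree) {u v : X} (p q : T.Walk u v) (hp : p.IsPath)
    (hq : q.IsPath) : p = q :=
  ((ht.existsUnique_path u v).unique hp hq)

lemma aux_getVert_one_takeUntil [DecidableEq X] {x y v : X} (p : T.Walk x y) (hv : v ∈ p.support)
    (hvx : v ≠ x) : (p.takeUntil v hv).getVert 1 = p.getVert 1 := by
  have hspec := p.take_spec hv
  have hlen : (p.takeUntil v hv).length ≠ 0 := by
    intro h0
    exact hvx (Walk.eq_of_length_eq_zero h0).symm
  conv_rhs => rw [← hspec]
  rw [Walk.getVert_append]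
  by_cases h1 : 1 < (p.takeUntil v hv).length
  · simp [h1]
  · have hl : (p.takeUntil v hv).length = 1 := by omega
    rw [if_neg h1, hl]
    simp [Walk.getVert_zero, ← hl, Walk.getVert_length]

lemma aux_disj [DecidableEq X] (ht : T.IsTree) {x y z : X} {p : T.Walk x y} {q : T.Walk x z}
    (hp : p.IsPath) (hq : q.IsPath) (hne : p.getVert 1 ≠ q.getVert 1) :
    ∀ v, v ∈ p.support → v ∈ q.support → v = x := by
  intro v hvp hvq
  by_contra hvx
  have h1 := aux_getVert_one_takeUntil p hvp hvx
  have h2 := aux_getVert_one_takeUntil q hvq hvx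
  have := aux_unique ht (p.takeUntil v hvp) (q.takeUntil v hvq) (hp.takeUntil hvp)
    (hq.takeUntil hvq)
  apply hne
  rw [← h1, ← h2, this]

/-- Walk along a function with adjacency. -/
def walkOf (g : ℕ → X) (ha : ∀ n, T.Adj (g n) (g (n + 1))) : (n : ℕ) → T.Walk (g 0) (g n)
  | 0 => Walk.nil
  | n + 1 => (walkOf g ha n).concat (ha n)

@[simp] lemma length_walkOf (g : ℕ → X) (ha : ∀ n, T.Adj (g n) (g (n + 1))) (n : ℕ) :
    (walkOf (T := T) g ha n).length = n := by
  induction n with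
  | zero => rfl
  | succ n ih => simp [walkOf, Walk.length_concat, ih]

lemma getVert_walkOf (g : ℕ → X) (ha : ∀ n, T.Adj (g n) (g (n + 1))) {n k : ℕ} (hk : k ≤ n) :
    (walkOf (T := T) g ha n).getVert k = g k := by
  induction n with
  | zero => simp only [Nat.le_zero] at hk; subst hk; simp [walkOf]
  | succ n ih =>
    rw [walkOf, Walk.concat_eq_append, Walk.getVert_append, length_walkOf]
    by_cases h : k < n
    · rw [if_pos h]; exact ih h.le
    · rw [if_neg h]
      rcases (by omega : k = n ∨ k = n + 1) with rfl | rfl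
      · simp
      · have h1 : n + 1 - n = 1 := by omega
        rw [h1]
        rfl

lemma support_walkOf (g : ℕ → X) (ha : ∀ n, T.Adj (g n) (g (n + 1))) (n : ℕ) :
    (walkOf (T := T) g ha n).support = (List.range (n + 1)).map g := by
  induction n with
  | zero => simp [walkOf, List.range_succ]
  | succ n ih =>
    rw [walkOf, Walk.support_concat, ih]
    simp [List.range_succ]

lemma isPath_walkOf [DecidableEq X] (ht : T.IsTree) (g : ℕ → X)
    (ha : ∀ n, T.Adj (g n) (g (n + 1))) (hnb : ∀ n, g (n + 2) ≠ g n) (n : ℕ) :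
    (walkOf (T := T) g ha n).IsPath := by
  induction n with
  | zero => exact Walk.IsPath.nil
  | succ n ih =>
    set W := walkOf (T := T) g ha n with hW
    rw [walkOf, Walk.concat_eq_append]
    rw [Walk.isPath_def, Walk.support_append, List.nodup_append]
    refine ⟨ih.support_nodup, by simp, ?_⟩
    -- disjointness: g (n+1) ∉ W.support
    intro a haW b ha2 hab
    simp only [Walk.support_cons, Walk.support_nil, List.tail_cons, List.mem_singleton] at ha2
    subst ha2
    subst hab
    rw [support_walkOf, List.mem_map] at haW
    obtain ⟨j, hj, hgj⟩ := haW
    rw [List.mem_range] at hj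
    have hj' : j ≤ n := by omega
    -- case j = n : adjacent vertices distinct
    rcases eq_or_lt_of_le hj' with rfl | hjn
    · exact (ha j).ne hgj
    -- case j < n : uniqueness of paths
    have hmem : g j ∈ W.support := by
      rw [support_walkOf, List.mem_map]
      exact ⟨j, List.mem_range.2 (by omega), rfl⟩
    have hn1 : 1 ≤ n := by omega
    set Q1 := W.dropUntil (g j) hmem with hQ1
    have hQ1path : Q1.IsPath := ih.dropUntil hmem
    have hQ2 : ((Walk.cons ((ha n).symm) Walk.nil).copy hgj.symm rfl : T.Walk (g j) (g n)).IsPath := by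
      rw [Walk.isPath_copy]
      refine Walk.IsPath.cons Walk.IsPath.nil ?_
      simp only [Walk.support_nil, List.mem_singleton]
      exact (ha n).ne'
    have heq := aux_unique ht Q1 _ hQ1path hQ2
    have hlenQ1 : Q1.length = 1 := by
      rw [heq, Walk.length_copy]
      rfl
    -- length of takeUntil is n - 1
    have hspec := W.take_spec hmem
    have hlens : (W.takeUntil (g j) hmem).length + Q1.length = n := by
      rw [← Walk.length_append, hspec, hW, length_walkOf]
    have hlt : (W.takeUntil (g j) hmem).length = n - 1 := by omega
    -- W.getVert (n-1) = g j
    have hgv : W.getVert (n - 1) = g j := by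
      conv_lhs => rw [← hspec]
      rw [Walk.getVert_append, hlt, if_neg (lt_irrefl _), Nat.sub_self]
      exact Walk.getVert_zero Q1
    rw [getVert_walkOf (T := T) g ha (by omega)] at hgv
    -- so j = n - 1 by injectivity along W
    have hj1 : j = n - 1 := by
      apply aux_getVert_injOn ih j (n - 1)
      · rw [hW, length_walkOf]; omega
      · rw [hW, length_walkOf]; omega
      · rw [getVert_walkOf (T := T) g ha (by omega : j ≤ n),
          getVert_walkOf (T := T) g ha (by omega : n - 1 ≤ n)]
        exact hgv.symm
    have := hnb (n - 1)
    rw [(by omega : n - 1 + 2 = n + 1)] at this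
    apply this
    rw [← hj1]
    exact hgj.symm

lemma aux_g_inj [DecidableEq X] (ht : T.IsTree) (g : ℕ → X)
    (ha : ∀ n, T.Adj (g n) (g (n + 1))) (hnb : ∀ n, g (n + 2) ≠ g n) :
    Function.Injective g := by
  have key : ∀ i j, i ≤ j → g i = g j → i = j := by
    intro i j hij hgij
    have hp := isPath_walkOf ht g ha hnb j
    apply aux_getVert_injOn hp i j (by simp [hij]) (by simp)
    rw [getVert_walkOf g ha hij, getVert_walkOf g ha le_rfl]
    exact hgij
  intro i j h
  rcases le_total i j with hle | hle
  · exact key i j hle h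
  · exact (key j i hle h.symm).symm

lemma aux_exists_other (hdeg : ∀ v, #(T.neighborSet v) = 2 ∨ BranchVtx T v)
    {v w : X} (h : T.Adj v w) : ∃ z, T.Adj v z ∧ z ≠ w := by
  have h1 : 1 < #(T.neighborSet v) := by
    rcases hdeg v with h2 | h2 <;> rw [h2]
    · exact one_lt_two
    · exact Cardinal.one_lt_aleph0
  rw [Cardinal.one_lt_iff_nontrivial] at h1
  obtain ⟨z, hz, hzw⟩ := (Set.nontrivial_coe_sort.mp h1).exists_ne w
  exact ⟨z, hz, hzw⟩

lemma aux_grow [DecidableEq X] (hsub : IsSubdivTOmega T) {x u : X} (hx : BranchVtx T x)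
    (hadj : T.Adj x u) :
    ∃ (y : X) (W : T.Walk x y), SubdividedEdge T W ∧ W.getVert 1 = u := by
  obtain ⟨ht, hdeg, hray⟩ := hsub
  classical
  -- the "other neighbor" choice function
  let other : X → X → X := fun v w =>
    if h : ∃ z, T.Adj v z ∧ z ≠ w then h.choose else w
  have other_spec : ∀ v w, (∃ z, T.Adj v z ∧ z ≠ w) →
      T.Adj v (other v w) ∧ other v w ≠ w := by
    intro v w h
    simp only [other, dif_pos h]
    exact h.choose_spec
  -- the greedy non-backtracking sequence
  let hseq : ℕ → X × X := fun n => Nat.rec ((x, u) : X × X) (fun _ p => (p.2, other p.2 p.1)) n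
  let g : ℕ → X := fun n => (hseq n).1
  have hg0 : g 0 = x := rfl
  have hg1 : g 1 = u := rfl
  have hstep : ∀ n, g (n + 2) = other (g (n + 1)) (g n) := fun n => rfl
  have hkey : ∀ n, T.Adj (g n) (g (n + 1)) ∧ g (n + 2) ≠ g n := by
    intro n
    induction n with
    | zero =>
      refine ⟨hadj, ?_⟩
      rw [hstep 0]
      exact (other_spec (g 1) (g 0) (aux_exists_other hdeg hadj.symm)).2
    | succ n ih =>
      have hadj1 : T.Adj (g (n + 1)) (g (n + 2)) := by
        rw [hstep n]
        exact (other_spec (g (n + 1)) (g n) (aux_exists_other hdeg ih.1.symm)).1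
      refine ⟨hadj1, ?_⟩
      rw [hstep (n + 1)]
      exact (other_spec (g (n + 2)) (g (n + 1)) (aux_exists_other hdeg hadj1.symm)).2
  have ha : ∀ n, T.Adj (g n) (g (n + 1)) := fun n => (hkey n).1
  have hnb : ∀ n, g (n + 2) ≠ g n := fun n => (hkey n).2
  have hginj := aux_g_inj ht g ha hnb
  -- some later vertex is a branch vertex
  have hN : ∃ n, BranchVtx T (g (n + 1)) := by
    by_contra hno
    push_neg at hno
    obtain ⟨n, hn⟩ := hray (fun m => g (m + 1))
      ⟨fun a b hab => by
        have h2 : g (a + 1) = g (b + 1) := hab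
        have := @hginj (a + 1) (b + 1) h2
        omega, fun n => ha (n + 1)⟩
    exact hno n hn
  let N := Nat.find hN
  have hNbr : BranchVtx T (g (N + 1)) := Nat.find_spec hN
  have hNmin : ∀ m, m < N → ¬ BranchVtx T (g (m + 1)) := fun m hm => Nat.find_min hN hm
  refine ⟨g (N + 1), walkOf g ha (N + 1), ⟨isPath_walkOf ht g ha hnb (N + 1), hx, hNbr, ?_, ?_⟩,
    getVert_walkOf g ha (by omega)⟩
  · rw [length_walkOf]; omega
  · intro v hv hvx hvy
    rw [support_walkOf, List.mem_map] at hv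
    obtain ⟨k, hk, rfl⟩ := hv
    rw [List.mem_range] at hk
    have hk0 : k ≠ 0 := fun h => hvx (h ▸ rfl)
    have hkN : k ≠ N + 1 := fun h => hvy (h ▸ rfl)
    obtain ⟨m, rfl⟩ := Nat.exists_eq_succ_of_ne_zero hk0
    exact hNmin m (by omega)

lemma aux_select [DecidableEq X] (hsub : IsSubdivTOmega T) {r : X}
    (hunif : ∀ (x y z : X) (W : T.Walk x y) (W' : T.Walk x z),
      SubdividedEdge T W → SubdividedEdge T W' →
      (∀ P : T.Walk x r, P.IsPath → y ∉ P.support) →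
      (∀ P : T.Walk x r, P.IsPath → z ∉ P.support) →
      W.length = W'.length)
    (L : X → ℕ) (hL : Function.Injective L)
    {x : X} (hx : BranchVtx T x) (p : T.Walk r x) (hp : p.IsPath) (C : ℕ → ℕ) :
    ∃ (y : X) (W : T.Walk x y), SubdividedEdge T W ∧
      ∀ v ∈ W.support, v ≠ x → v ∉ p.support ∧ C W.length ≤ L v := by
  classical
  have ht := hsub.1
  set U : Set X := {u | T.Adj x u ∧ u ∉ p.support} with hUdef
  have hUinf : U.Infinite := by
    have h1 : (T.neighborSet x).Infinite := by
      rw [← Set.infinite_coe_iff]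
      exact Cardinal.infinite_iff.mpr (le_of_eq hx.symm)
    refine (h1.diff p.support.finite_toSet).mono ?_
    intro u hu
    exact ⟨hu.1, hu.2⟩
  have hWex : ∀ u : X, ∃ (y : X) (W : T.Walk x y),
      u ∈ U → SubdividedEdge T W ∧ W.getVert 1 = u := by
    intro u
    by_cases hu : u ∈ U
    · obtain ⟨y, W, h1, h2⟩ := aux_grow hsub hx hu.1
      exact ⟨y, W, fun _ => ⟨h1, h2⟩⟩
    · exact ⟨x, Walk.nil, fun h => absurd h hu⟩
  choose yf Wf hWf using hWex
  -- (a) endpoints differ from x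
  have hyne : ∀ u ∈ U, yf u ≠ x := by
    intro u hu heq
    have hS := (hWf u hu).1
    have h0 := aux_getVert_injOn hS.1 0 (Wf u).length (by omega) le_rfl
      (by rw [Walk.getVert_zero, Walk.getVert_length, heq])
    have hpos := hS.2.2.2.1
    omega
  -- (b) walks avoid p away from x
  have hbp : ∀ u ∈ U, ∀ v ∈ (Wf u).support, v ≠ x → v ∉ p.support := by
    intro u hu v hv hvx hvp
    have hS := (hWf u hu).1
    by_cases hplen : p.length = 0
    · have hrx : r = x := Walk.eq_of_length_eq_zero hplen
      rw [Walk.mem_support_iff_exists_getVert] at hvp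
      obtain ⟨i, hgv, hi⟩ := hvp
      rw [hplen, Nat.le_zero] at hi
      subst hi
      rw [Walk.getVert_zero] at hgv
      exact hvx (hgv ▸ hrx)
    · have hq : p.reverse.IsPath := hp.reverse
      have hq1mem : p.reverse.getVert 1 ∈ p.support := by
        have h1 : p.reverse.getVert 1 ∈ p.reverse.support :=
          Walk.mem_support_iff_exists_getVert.2 ⟨1, rfl, by rw [Walk.length_reverse]; omega⟩
        rwa [Walk.support_reverse, List.mem_reverse] at h1
      have hne : (Wf u).getVert 1 ≠ p.reverse.getVert 1 := by
        rw [(hWf u hu).2]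
        intro h
        exact hu.2 (h ▸ hq1mem)
      exact hvx (aux_disj ht hS.1 hq hne v hv
        (by rwa [Walk.support_reverse, List.mem_reverse]))
  -- (c) endpoints avoid p entirely
  have hyp : ∀ u ∈ U, yf u ∉ p.support := fun u hu =>
    hbp u hu (yf u) (Walk.end_mem_support _) (hyne u hu)
  -- (d) pairwise disjointness
  have hdisj : ∀ u ∈ U, ∀ u' ∈ U, u ≠ u' →
      ∀ v, v ∈ (Wf u).support → v ∈ (Wf u').support → v = x := by
    intro u hu u' hu' hne v h1 h2
    refine aux_disj ht (hWf u hu).1.1 (hWf u' hu').1.1 ?_ v h1 h2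
    rw [(hWf u hu).2, (hWf u' hu').2]
    exact hne
  -- (e) all walks have the same length
  have hsame : ∀ u ∈ U, ∀ u' ∈ U, (Wf u).length = (Wf u').length := by
    intro u hu u' hu'
    refine hunif x (yf u) (yf u') (Wf u) (Wf u') (hWf u hu).1 (hWf u' hu').1 ?_ ?_
    · intro P hP
      rw [aux_unique ht P p.reverse hP hp.reverse, Walk.support_reverse, List.mem_reverse]
      exact hyp u hu
    · intro P hP
      rw [aux_unique ht P p.reverse hP hp.reverse, Walk.support_reverse, List.mem_reverse]
      exact hyp u' hu'
  -- bad vertices form a finite set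
  obtain ⟨u₀, hu₀⟩ := hUinf.nonempty
  set B := C ((Wf u₀).length) with hB
  set Bad : Set X := {u | u ∈ U ∧ ∃ v, v ∈ (Wf u).support ∧ v ≠ x ∧ L v < B} with hBad
  have hBadfin : Bad.Finite := by
    have hch : ∀ u : X, ∃ v : X, u ∈ Bad → v ∈ (Wf u).support ∧ v ≠ x ∧ L v < B := by
      intro u
      by_cases hu : u ∈ Bad
      · obtain ⟨v, hv⟩ := hu.2
        exact ⟨v, fun _ => hv⟩
      · exact ⟨x, fun h => absurd h hu⟩
    choose vf hvf using hch
    apply Set.Finite.of_finite_image (f := fun u => L (vf u))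
    · refine Set.Finite.subset (Set.finite_Iio B) ?_
      rintro _ ⟨u, hu, rfl⟩
      exact (hvf u hu).2.2
    · intro a ha b hb hab
      have hv : vf a = vf b := hL hab
      by_contra hne
      exact (hvf a ha).2.1
        (hdisj a ha.1 b hb.1 hne (vf a) (hvf a ha).1 (hv ▸ (hvf b hb).1))
  -- pick a good neighbor
  obtain ⟨u, hu⟩ := (hUinf.diff hBadfin).nonempty
  refine ⟨yf u, Wf u, (hWf u hu.1).1, ?_⟩
  intro v hv hvx
  refine ⟨hbp u hu.1 v hv hvx, ?_⟩
  rw [hsame u hu.1 u₀ hu₀]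
  by_contra hlt
  exact hu.2 ⟨hu.1, v, hv, hvx, by omega⟩

end AuxStmt5

/-- Every uniform subdivision of `T_ω` is dominating, witnessed by any injective
labelling. -/
theorem stmt5 {X : Type} (T : SimpleGraph X) (hT : UniformSubdivTOmega T)
    (L : X → ℕ) (hL : Function.Injective L) :
    ∀ f : ℕ → ℕ, ∃ R : ℕ → X, IsRay T R ∧ EvDom f (L ∘ R) := by
  classical
  intro f
  obtain ⟨hsub, r, hr, hunif⟩ := hT
  -- one-step extension of a path rooted at `r` ending at a branch vertex
  have hstep : ∀ s : Σ y : X, T.Walk r y, ∃ t : Σ y : X, T.Walk r y,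
      (s.2.IsPath ∧ BranchVtx T s.1) →
      (t.2.IsPath ∧ BranchVtx T t.1 ∧ s.2.length < t.2.length ∧
        (∀ m ≤ s.2.length, t.2.getVert m = s.2.getVert m) ∧
        ∀ m, s.2.length < m → m ≤ t.2.length → f m ≤ L (t.2.getVert m)) := by
    rintro ⟨y, p⟩
    by_cases hpre : p.IsPath ∧ BranchVtx T y
    · obtain ⟨z, W, hS, hprop⟩ := aux_select hsub hunif L hL hpre.2 p hpre.1
        (fun k => (Finset.range (p.length + k + 1)).sup f)
      have hytail : y ∉ W.support.tail := by
        have h1 := hS.1.support_nodup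
        rw [W.support_eq_cons] at h1
        exact (List.nodup_cons.mp h1).1
      refine ⟨⟨z, p.append W⟩, fun _ => ⟨?_, hS.2.2.1, ?_, ?_, ?_⟩⟩
      · -- the appended walk is a path
        rw [Walk.isPath_def, Walk.support_append, List.nodup_append]
        refine ⟨hpre.1.support_nodup, hS.1.support_nodup.tail, ?_⟩
        intro a hap b hat hab
        rw [← hab] at hat
        by_cases hax : a = y
        · exact hytail (hax ▸ hat)
        · exact (hprop a (List.mem_of_mem_tail hat) hax).1 hap
      · simp only [Walk.length_append]
        have := hS.2.2.2.1
        omega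
      · intro m hm
        rw [Walk.getVert_append]
        rcases lt_or_eq_of_le hm with hlt | rfl
        · rw [if_pos hlt]
        · rw [if_neg (lt_irrefl _), Nat.sub_self, Walk.getVert_zero, Walk.getVert_length]
      · intro m h1 h2
        have h1' : p.length < m := h1
        have h2' : m ≤ p.length + W.length := by
          have : m ≤ (p.append W).length := h2
          rwa [Walk.length_append] at this
        show f m ≤ L ((p.append W).getVert m)
        rw [Walk.getVert_append, if_neg (by omega)]
        have hvmem : W.getVert (m - p.length) ∈ W.support := by
          rw [Walk.mem_support_iff_exists_getVert]
          exact ⟨m - p.length, rfl, by omega⟩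
        have hvy : W.getVert (m - p.length) ≠ y := by
          intro hvy
          have := aux_getVert_injOn hS.1 (m - p.length) 0 (by omega) (by omega)
            (by rw [Walk.getVert_zero]; exact hvy)
          omega
        have hle := (hprop _ hvmem hvy).2
        exact le_trans (Finset.le_sup (f := f) (Finset.mem_range.2 (by omega))) hle
    · exact ⟨⟨y, p⟩, fun h => absurd h hpre⟩
  choose stepF hstepF using hstep
  let F : ℕ → Σ y : X, T.Walk r y := fun i => stepF^[i] ⟨r, Walk.nil⟩
  have hFsucc : ∀ i, F (i + 1) = stepF (F i) := fun i => Function.iterate_succ_apply' _ _ _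
  have hInv : ∀ i, ((F i).2.IsPath ∧ BranchVtx T (F i).1) ∧ i ≤ (F i).2.length ∧
      ∀ m, 1 ≤ m → m ≤ (F i).2.length → f m ≤ L ((F i).2.getVert m) := by
    intro i
    induction i with
    | zero =>
      refine ⟨⟨Walk.IsPath.nil, hr⟩, le_rfl, ?_⟩
      intro m h1 h2
      have h0 : (F 0).2.length = 0 := rfl
      omega
    | succ i ih =>
      have h := hstepF (F i) ih.1
      rw [← hFsucc i] at h
      refine ⟨⟨h.1, h.2.1⟩, ?_, ?_⟩
      · have := ih.2.1
        have := h.2.2.1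
        omega
      · intro m h1 h2
        by_cases hm : m ≤ (F i).2.length
        · rw [h.2.2.2.1 m hm]
          exact ih.2.2 m h1 hm
        · exact h.2.2.2.2 m (by omega) h2
  have hmono : ∀ i j, i ≤ j → (F i).2.length ≤ (F j).2.length := by
    intro i j hij
    induction j, hij using Nat.le_induction with
    | base => exact le_rfl
    | succ j hij ih =>
      have h := hstepF (F j) (hInv j).1
      rw [← hFsucc j] at h
      exact le_trans ih h.2.2.1.le
  have hcoh : ∀ i j, i ≤ j → ∀ m ≤ (F i).2.length, (F j).2.getVert m = (F i).2.getVert m := by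
    intro i j hij
    induction j, hij using Nat.le_induction with
    | base => intro m _; rfl
    | succ j hij ih =>
      intro m hm
      have h := hstepF (F j) (hInv j).1
      rw [← hFsucc j] at h
      rw [h.2.2.2.1 m (le_trans hm (hmono i j hij)), ih m hm]
  refine ⟨fun n => (F n).2.getVert n, ⟨?_, ?_⟩, ?_⟩
  · -- injectivity
    have key : ∀ a b, a ≤ b → (F a).2.getVert a = (F b).2.getVert b → a = b := by
      intro a b hab he
      apply aux_getVert_injOn (hInv b).1.1 a b (le_trans hab (hInv b).2.1) (hInv b).2.1
      rw [hcoh a b hab a (hInv a).2.1]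
      exact he
    intro a b he
    rcases le_total a b with hab | hab
    · exact key a b hab he
    · exact (key b a hab he.symm).symm
  · -- adjacency
    intro n
    have h1 : (F (n + 1)).2.getVert n = (F n).2.getVert n :=
      hcoh n (n + 1) (by omega) n (hInv n).2.1
    show T.Adj ((F n).2.getVert n) ((F (n + 1)).2.getVert (n + 1))
    rw [← h1]
    exact Walk.adj_getVert_succ _ (lt_of_lt_of_le (by omega) (hInv (n + 1)).2.1)
  · -- eventual domination
    rw [EvDom, Filter.eventually_atTop]
    exact ⟨1, fun n hn => (hInv n).2.2 n hn (hInv n).2.1⟩
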